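/- Let φ ∈ C²((0,∞); ℝ) and F > 0 with φ''(2F) ≤ 0. Then the infimum of E_a''(y_F)[u,u] over all u ∈ 𝒰 with ‖u'‖_{ℓ²_ε} = 1 equals A_F − ε² μ_ε² φ''(2F), where μ_ε = 2 sin(πε/2)/ε. -/

import Mathlib

open Finset Real

noncomputable section

/-- The index set `{-N+1, ..., N}` of one period. -/
def idx (N : ℕ) : Finset ℤ := Finset.Icc (-(N : ℤ) + 1) (N : ℤ)

/-- The space 𝒰 of 2N-periodic displacements with zero mean. -/
def uSet (N : ℕ) : Set (ℤ → ℝ) :=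
  {u | (∀ ℓ : ℤ, u (ℓ + 2 * (N : ℤ)) = u ℓ) ∧ ∑ ℓ ∈ idx N, u ℓ = 0}

/-- Backward difference `v'_ℓ = ε⁻¹ (v_ℓ - v_{ℓ-1})`, with `ε = 1/N`. -/
def bD (N : ℕ) (v : ℤ → ℝ) (ℓ : ℤ) : ℝ := (N : ℝ) * (v ℓ - v (ℓ - 1))

/-- Centered second difference `v''_ℓ = ε⁻² (v_{ℓ+1} - 2 v_ℓ + v_{ℓ-1})`. -/
def cD2 (N : ℕ) (v : ℤ → ℝ) (ℓ : ℤ) : ℝ := (N : ℝ) ^ 2 * (v (ℓ + 1) - 2 * v ℓ + v (ℓ - 1))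

/-- Weighted ℓ²-norm. -/
def nl2 (N : ℕ) (v : ℤ → ℝ) : ℝ := Real.sqrt ((N : ℝ)⁻¹ * ∑ ℓ ∈ idx N, (v ℓ) ^ 2)

/-- Weighted ℓ¹-norm. -/
def nl1 (N : ℕ) (v : ℤ → ℝ) : ℝ := (N : ℝ)⁻¹ * ∑ ℓ ∈ idx N, |v ℓ|

/-- ℓ∞-norm over one period. -/
def nlinf (N : ℕ) (v : ℤ → ℝ) : ℝ := ⨆ ℓ : {ℓ : ℤ // ℓ ∈ idx N}, |v ℓ.1|

/-- Weighted ℓ²-inner product. -/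
def iprod (N : ℕ) (u v : ℤ → ℝ) : ℝ := (N : ℝ)⁻¹ * ∑ ℓ ∈ idx N, u ℓ * v ℓ

/-- The uniform deformation `(y_F)_ℓ = F ℓ ε`. -/
def yF (N : ℕ) (F : ℝ) : ℤ → ℝ := fun ℓ => F * (ℓ : ℝ) * (N : ℝ)⁻¹

/-- First variation `E'(y)[u]`. -/
def dE (E : (ℤ → ℝ) → ℝ) (y u : ℤ → ℝ) : ℝ := deriv (fun t : ℝ => E (y + t • u)) 0

/-- Second variation `E''(y)[u,v]`. -/
def d2E (E : (ℤ → ℝ) → ℝ) (y u v : ℤ → ℝ) : ℝ :=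
  deriv (fun s : ℝ => deriv (fun t : ℝ => E (y + s • u + t • v)) 0) 0

/-- The atomistic energy. -/
def Ea (N : ℕ) (φ : ℝ → ℝ) (y : ℤ → ℝ) : ℝ :=
  (N : ℝ)⁻¹ * ∑ ℓ ∈ idx N, (φ (bD N y ℓ) + φ (bD N y ℓ + bD N y (ℓ + 1)))

/-- The local QC (continuum) energy. -/
def Eqcl (N : ℕ) (φ : ℝ → ℝ) (y : ℤ → ℝ) : ℝ :=
  (N : ℝ)⁻¹ * ∑ ℓ ∈ idx N, (φ (bD N y ℓ) + φ (2 * bD N y ℓ))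

/-- The QNL atomistic region `{-K-1, ..., K+1}`. -/
def aQnl (K : ℕ) : Finset ℤ := Finset.Icc (-(K : ℤ) - 1) ((K : ℤ) + 1)

/-- The quasi-nonlocal QC energy. -/
def Eqnl (N K : ℕ) (φ : ℝ → ℝ) (y : ℤ → ℝ) : ℝ :=
  (N : ℝ)⁻¹ * ((∑ ℓ ∈ idx N, φ (bD N y ℓ))
    + (∑ ℓ ∈ aQnl K, φ (bD N y ℓ + bD N y (ℓ + 1)))
    + ∑ ℓ ∈ idx N \ aQnl K, (φ (2 * bD N y ℓ) + φ (2 * bD N y (ℓ + 1))) / 2)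

/-- The QCE atomistic region `{-K, ..., K}`. -/
def aQce (K : ℕ) : Finset ℤ := Finset.Icc (-(K : ℤ)) (K : ℤ)

/-- Atomistic energy contribution of atom ℓ. -/
def eAtom (N : ℕ) (φ : ℝ → ℝ) (y : ℤ → ℝ) (ℓ : ℤ) : ℝ :=
  (φ (bD N y ℓ) + φ (bD N y (ℓ + 1)) + φ (bD N y (ℓ - 1) + bD N y ℓ)
    + φ (bD N y (ℓ + 1) + bD N y (ℓ + 2))) / 2

/-- Continuum energy contribution of atom ℓ. -/
def eCont (N : ℕ) (φ : ℝ → ℝ) (y : ℤ → ℝ) (ℓ : ℤ) : ℝ :=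
  (φ (bD N y ℓ) + φ (bD N y (ℓ + 1)) + φ (2 * bD N y ℓ) + φ (2 * bD N y (ℓ + 1))) / 2

/-- The energy-based QC energy. -/
def Eqce (N K : ℕ) (φ : ℝ → ℝ) (y : ℤ → ℝ) : ℝ :=
  (N : ℝ)⁻¹ * ((∑ ℓ ∈ idx N \ aQce K, eCont N φ y ℓ) + ∑ ℓ ∈ aQce K, eAtom N φ y ℓ)

/-- The prescribed backward difference `ĝ'` of the ghost-force corrector. -/
def ghatD (K : ℕ) (ℓ : ℤ) : ℝ :=
  if ℓ = -(K : ℤ) - 1 ∨ ℓ = (K : ℤ) + 2 then -(1 / 2)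
  else if ℓ = -(K : ℤ) + 1 ∨ ℓ = (K : ℤ) then 1 / 2 else 0

/-- `μ_ε = 2 sin(π ε / 2) / ε` with `ε = 1/N`. -/
def muEps (N : ℕ) : ℝ := 2 * Real.sin (Real.pi * (N : ℝ)⁻¹ / 2) / (N : ℝ)⁻¹

/-- The `𝒰^{-1,∞}`-norm of a functional `T` on 𝒰. -/
def dualNorm (N : ℕ) (T : (ℤ → ℝ) → ℝ) : ℝ :=
  sSup {r : ℝ | ∃ v ∈ uSet N, nl1 N (bD N v) = 1 ∧ r = T v}


lemma sum_idx_shift {M : Type*} [AddCommMonoid M] (N : ℕ) (hN : 1 ≤ N) (f : ℤ → M)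
    (hf : ∀ ℓ : ℤ, f (ℓ + 2 * N) = f ℓ) :
    ∑ ℓ ∈ idx N, f (ℓ + 1) = ∑ ℓ ∈ idx N, f ℓ := by
  have hN' : (1:ℤ) ≤ (N:ℤ) := by exact_mod_cast hN
  have h1 : ∑ ℓ ∈ idx N, f (ℓ + 1) = ∑ ℓ ∈ Finset.Icc (-(N:ℤ) + 2) ((N:ℤ) + 1), f ℓ := by
    rw [show Finset.Icc (-(N:ℤ) + 2) ((N:ℤ) + 1)
        = Finset.map (addRightEmbedding 1) (idx N) by
      simp only [idx]; rw [Finset.map_add_right_Icc]; congr 1 <;> ring]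
    rw [Finset.sum_map]; rfl
  have h2 : Finset.Icc (-(N:ℤ) + 2) ((N:ℤ) + 1)
      = insert ((N:ℤ) + 1) (Finset.Icc (-(N:ℤ) + 2) (N:ℤ)) := by
    ext ℓ; simp only [Finset.mem_Icc, Finset.mem_insert]; omega
  have h3 : idx N = insert (-(N:ℤ) + 1) (Finset.Icc (-(N:ℤ) + 2) (N:ℤ)) := by
    ext ℓ; simp only [idx, Finset.mem_Icc, Finset.mem_insert]; omega
  have h4 : f ((N:ℤ) + 1) = f (-(N:ℤ) + 1) := by
    rw [show ((N:ℤ) + 1) = (-(N:ℤ) + 1) + 2 * N by ring, hf]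
  have hnm1 : ((N:ℤ) + 1) ∉ Finset.Icc (-(N:ℤ) + 2) (N:ℤ) := by
    simp only [Finset.mem_Icc]; omega
  have hnm2 : (-(N:ℤ) + 1) ∉ Finset.Icc (-(N:ℤ) + 2) (N:ℤ) := by
    simp only [Finset.mem_Icc]; omega
  rw [h1, h2, Finset.sum_insert hnm1, h4, h3, Finset.sum_insert hnm2]



def wz (N : ℕ) (d : ℤ) : ℂ := Complex.exp ((((d : ℝ) * π / N : ℝ) : ℂ) * Complex.I)

lemma wz_re (N : ℕ) (d : ℤ) : (wz N d).re = Real.cos ((d : ℝ) * π / N) :=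
  Complex.exp_ofReal_mul_I_re _

lemma wz_im (N : ℕ) (d : ℤ) : (wz N d).im = Real.sin ((d : ℝ) * π / N) :=
  Complex.exp_ofReal_mul_I_im _

lemma wz_add (N : ℕ) (d e : ℤ) : wz N (d + e) = wz N d * wz N e := by
  rw [wz, wz, wz, ← Complex.exp_add]
  congr 1
  push_cast
  ring

lemma wz_zero (N : ℕ) : wz N 0 = 1 := by simp [wz]

lemma wz_conj (N : ℕ) (d : ℤ) : (starRingEnd ℂ) (wz N d) = wz N (-d) := by
  rw [wz, wz, ← Complex.exp_conj]
  congr 1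
  simp [Complex.conj_I]
  ring

lemma wz_two_N (N : ℕ) (hN : 1 ≤ N) : wz N (2 * N) = 1 := by
  have hNne : (N:ℝ) ≠ 0 := by positivity
  rw [wz]
  have : (((2 * (N:ℤ) : ℤ) : ℝ) * π / N : ℝ) = 2 * π := by push_cast; field_simp
  rw [this]
  simpa using Complex.exp_int_mul_two_pi_mul_I 1

lemma wz_periodic (N : ℕ) (hN : 1 ≤ N) (d : ℤ) : wz N (d + 2 * N) = wz N d := by
  rw [wz_add, wz_two_N N hN, mul_one]

lemma wz_pow (N : ℕ) (k : ℕ) (d : ℤ) : wz N (k * d) = (wz N d) ^ k := by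
  induction k with
  | zero => simp [wz_zero]
  | succ n ih => rw [show ((n+1 : ℕ) : ℤ) * d = n * d + d by push_cast; ring, wz_add, ih, pow_succ]

lemma wz_ne_one (N : ℕ) (hN : 1 ≤ N) (d : ℤ) (hd : ¬ ((2 * (N:ℤ)) ∣ d)) : wz N d ≠ 1 := by
  intro h
  rw [wz, Complex.exp_eq_one_iff] at h
  obtain ⟨m, hm⟩ := h
  apply hd
  have hNne : (N:ℝ) ≠ 0 := by positivity
  have hπ : (π:ℝ) ≠ 0 := Real.pi_ne_zero
  have hm' : (((d : ℝ) * π / N : ℝ) : ℂ) * Complex.I = (((m : ℝ) * (2 * π) : ℝ) : ℂ) * Complex.I := by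
    rw [hm]; push_cast; ring
  have h2 : ((d : ℝ) * π / N : ℝ) = ((m : ℝ) * (2 * π) : ℝ) := by
    have := mul_right_cancel₀ Complex.I_ne_zero hm'
    exact_mod_cast this
  have h3 : (d : ℝ) = 2 * N * m := by
    field_simp at h2
    have h4 : (d:ℝ) * π = (2 * N * m) * π := by rw [h2]; ring
    exact mul_right_cancel₀ hπ h4
  exact ⟨m, by exact_mod_cast h3⟩

lemma wz_mul_two_N (N : ℕ) (hN : 1 ≤ N) (m : ℤ) : wz N (2 * N * m) = 1 := by
  induction m using Int.induction_on with
  | zero => simpa using wz_zero N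
  | succ n ih => rw [show 2 * (N:ℤ) * (n + 1) = 2 * N * n + 2 * N by ring, wz_periodic N hN, ih]
  | pred n ih =>
    have h := wz_periodic N hN (2 * N * (-(n:ℤ) - 1))
    rw [show 2 * (N:ℤ) * (-(n:ℤ) - 1) + 2 * N = 2 * N * (-(n:ℤ)) by ring] at h
    rw [← h]
    exact ih

lemma geom_wz (N : ℕ) (hN : 1 ≤ N) (d : ℤ) (hd : ¬ ((2 * (N:ℤ)) ∣ d)) :
    ∑ k ∈ Finset.range (2 * N), wz N (k * d) = 0 := by
  have h1 : ∀ k ∈ Finset.range (2 * N), wz N (k * d) = (wz N d) ^ k := fun k _ => wz_pow N k d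
  rw [Finset.sum_congr rfl h1, geom_sum_eq (wz_ne_one N hN d hd)]
  have : (wz N d) ^ (2 * N) = 1 := by
    rw [← wz_pow, show ((2 * N : ℕ) : ℤ) * d = 2 * N * d by push_cast; ring]
    exact wz_mul_two_N N hN d
  rw [this]
  simp

lemma geom_wz_dvd (N : ℕ) (hN : 1 ≤ N) (d : ℤ) (hd : (2 * (N:ℤ)) ∣ d) :
    ∑ k ∈ Finset.range (2 * N), wz N (k * d) = (2 * N : ℂ) := by
  obtain ⟨m, rfl⟩ := hd
  have h1 : ∀ k ∈ Finset.range (2 * N), wz N (k * (2 * N * m)) = 1 := by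
    intro k _
    rw [show (k:ℤ) * (2 * N * m) = 2 * N * (k * m) by ring]
    exact wz_mul_two_N N hN (k * m)
  rw [Finset.sum_congr rfl h1]
  simp


def four (N : ℕ) (a : ℤ → ℝ) (k : ℕ) : ℂ := ∑ ℓ ∈ idx N, (a ℓ : ℂ) * wz N (k * ℓ)

lemma abs_sub_lt_two_N {N : ℕ} {ℓ m : ℤ} (hℓ : ℓ ∈ idx N) (hm : m ∈ idx N) :
    |ℓ - m| < 2 * N := by
  simp only [idx, Finset.mem_Icc] at hℓ hm
  rw [abs_lt]
  omega

lemma sum_wz_orth (N : ℕ) (hN : 1 ≤ N) {ℓ m : ℤ} (hℓ : ℓ ∈ idx N) (hm : m ∈ idx N) :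
    ∑ k ∈ Finset.range (2 * N), wz N (k * (ℓ - m)) = if ℓ = m then (2 * N : ℂ) else 0 := by
  by_cases h : ℓ = m
  · rw [if_pos h, h]
    simp only [sub_self, mul_zero]
    have : ∀ k ∈ Finset.range (2 * N), wz N 0 = (1:ℂ) := fun _ _ => wz_zero N
    rw [Finset.sum_congr rfl this]
    simp
  · rw [if_neg h]
    apply geom_wz N hN
    intro hdvd
    exact h (by have := Int.eq_zero_of_abs_lt_dvd hdvd (abs_sub_lt_two_N hℓ hm); omega)

lemma parseval (N : ℕ) (hN : 1 ≤ N) (a : ℤ → ℝ) :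
    ∑ k ∈ Finset.range (2 * N), Complex.normSq (four N a k)
      = 2 * N * ∑ ℓ ∈ idx N, (a ℓ) ^ 2 := by
  have key : (∑ k ∈ Finset.range (2 * N), (Complex.normSq (four N a k) : ℂ))
      = ((2 * N * ∑ ℓ ∈ idx N, (a ℓ) ^ 2 : ℝ) : ℂ) := by
    have e1 : ∀ k : ℕ, (Complex.normSq (four N a k) : ℂ)
        = ∑ ℓ ∈ idx N, ∑ m ∈ idx N, ((a ℓ * a m : ℝ) : ℂ) * wz N (k * (ℓ - m)) := by
      intro k
      rw [← Complex.mul_conj]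
      have hconj : (starRingEnd ℂ) (four N a k)
          = ∑ m ∈ idx N, ((a m : ℝ) : ℂ) * wz N (-(k * m)) := by
        rw [four, map_sum]
        refine Finset.sum_congr rfl fun m _ => ?_
        rw [map_mul, Complex.conj_ofReal, wz_conj]
      rw [hconj, four, Finset.sum_mul_sum]
      refine Finset.sum_congr rfl fun ℓ _ => Finset.sum_congr rfl fun m _ => ?_
      rw [show (k : ℤ) * (ℓ - m) = k * ℓ + -(k * m) by ring, wz_add]
      push_cast
      ring
    rw [Finset.sum_congr rfl (fun k _ => e1 k), Finset.sum_comm]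
    have e2 : ∀ ℓ ∈ idx N, ∑ k ∈ Finset.range (2 * N), ∑ m ∈ idx N,
        ((a ℓ * a m : ℝ) : ℂ) * wz N (k * (ℓ - m)) = ((a ℓ ^ 2 : ℝ) : ℂ) * (2 * N) := by
      intro ℓ hℓ
      rw [Finset.sum_comm]
      have e3 : ∀ m ∈ idx N, ∑ k ∈ Finset.range (2 * N),
          ((a ℓ * a m : ℝ) : ℂ) * wz N (k * (ℓ - m))
          = if ℓ = m then ((a ℓ ^ 2 : ℝ) : ℂ) * (2 * N) else 0 := by
        intro m hm
        rw [← Finset.mul_sum, sum_wz_orth N hN hℓ hm]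
        by_cases h : ℓ = m
        · rw [if_pos h, if_pos h, ← h]
          push_cast
          ring
        · rw [if_neg h, if_neg h, mul_zero]
      rw [Finset.sum_congr rfl e3, Finset.sum_ite_eq (idx N) ℓ, if_pos hℓ]
    rw [Finset.sum_congr rfl e2, ← Finset.sum_mul]
    push_cast
    ring
  exact_mod_cast key


lemma normSq_wz_sub_one (N : ℕ) (d : ℤ) :
    Complex.normSq (wz N d - 1) = 2 - 2 * Real.cos ((d : ℝ) * π / N) := by
  rw [Complex.normSq_apply, Complex.sub_re, Complex.sub_im, Complex.one_re, Complex.one_im,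
    wz_re, wz_im]
  have h := Real.sin_sq_add_cos_sq ((d : ℝ) * π / N)
  nlinarith [h]

lemma four_shift (N : ℕ) (hN : 1 ≤ N) (a : ℤ → ℝ) (ha : ∀ ℓ : ℤ, a (ℓ + 2 * N) = a ℓ) (k : ℕ) :
    four N (fun ℓ => a (ℓ + 1) - a ℓ) k = (wz N (-(k : ℤ)) - 1) * four N a k := by
  have hshift : ∑ ℓ ∈ idx N, (a (ℓ + 1) : ℂ) * wz N (k * ℓ)
      = wz N (-(k : ℤ)) * four N a k := by
    have hg : ∀ ℓ : ℤ, (a (ℓ + 2 * N) : ℂ) * wz N (k * (ℓ + 2 * N))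
        = (a ℓ : ℂ) * wz N (k * ℓ) := by
      intro ℓ
      rw [ha]
      congr 1
      rw [show (k : ℤ) * (ℓ + 2 * N) = k * ℓ + 2 * N * k by ring, wz_add,
        wz_mul_two_N N hN, mul_one]
    have := sum_idx_shift N hN (fun ℓ => (a ℓ : ℂ) * wz N (k * ℓ)) hg
    calc ∑ ℓ ∈ idx N, (a (ℓ + 1) : ℂ) * wz N (k * ℓ)
        = ∑ ℓ ∈ idx N, wz N (-(k:ℤ)) * ((a (ℓ + 1) : ℂ) * wz N (k * (ℓ + 1))) := by
          refine Finset.sum_congr rfl fun ℓ _ => ?_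
          rw [show (k:ℤ) * (ℓ + 1) = k * ℓ + k by ring, wz_add, ← mul_assoc]
          rw [show wz N (-(k:ℤ)) * (a (ℓ+1) : ℂ) * (wz N (k * ℓ) * wz N (k:ℤ))
            = (a (ℓ+1) : ℂ) * wz N (k * ℓ) * (wz N (-(k:ℤ)) * wz N (k:ℤ)) by ring,
            ← wz_add, neg_add_cancel, wz_zero, mul_one]
      _ = wz N (-(k:ℤ)) * four N a k := by
          rw [← Finset.mul_sum, this, four]
  rw [four]
  push_cast
  simp only [sub_mul, Complex.ofReal_sub]
  rw [Finset.sum_sub_distrib]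
  rw [hshift, four, one_mul]

lemma four_zero_of_mean_zero (N : ℕ) (a : ℤ → ℝ) (h0 : ∑ ℓ ∈ idx N, a ℓ = 0) :
    four N a 0 = 0 := by
  rw [four]
  have : ∀ ℓ ∈ idx N, (a ℓ : ℂ) * wz N ((0:ℕ) * ℓ) = (a ℓ : ℂ) := by
    intro ℓ _
    rw [show ((0:ℕ):ℤ) * ℓ = 0 by ring, wz_zero, mul_one]
  rw [Finset.sum_congr rfl this, ← Complex.ofReal_sum, h0, Complex.ofReal_zero]

lemma cos_le_cos_pi_div (N : ℕ) (hN : 1 ≤ N) (k : ℕ) (hk1 : 1 ≤ k) (hk2 : k ≤ 2 * N - 1) :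
    Real.cos ((k : ℝ) * π / N) ≤ Real.cos (π / N) := by
  have hNpos : (0:ℝ) < N := by exact_mod_cast hN
  have hπ := Real.pi_pos
  have hπN : 0 < π / N := by positivity
  have hk1' : (1:ℝ) ≤ (k:ℝ) := by exact_mod_cast hk1
  have hk2' : (k:ℝ) + 1 ≤ 2 * N := by exact_mod_cast (by omega : k + 1 ≤ 2 * N)
  have hx1 : π / N ≤ (k : ℝ) * π / N := by
    rw [div_le_div_iff₀ hNpos hNpos]
    nlinarith [mul_nonneg (mul_nonneg (sub_nonneg.2 hk1') hπ.le) hNpos.le]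
  have hx2 : (k : ℝ) * π / N ≤ 2 * π - π / N := by
    rw [show 2 * π - π / N = (2 * π * N - π) / N by field_simp, div_le_div_iff₀ hNpos hNpos]
    nlinarith [mul_nonneg (mul_nonneg (sub_nonneg.2 hk2') hπ.le) hNpos.le]
  by_cases h : (k : ℝ) * π / N ≤ π
  · exact Real.cos_le_cos_of_nonneg_of_le_pi (le_of_lt hπN) h hx1
  · rw [← Real.cos_two_pi_sub]
    apply Real.cos_le_cos_of_nonneg_of_le_pi (le_of_lt hπN)
    · push_neg at h
      linarith
    · linarith


lemma wirtinger (N : ℕ) (hN : 1 ≤ N) (a : ℤ → ℝ) (ha : ∀ ℓ : ℤ, a (ℓ + 2 * N) = a ℓ)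
    (h0 : ∑ ℓ ∈ idx N, a ℓ = 0) :
    (2 - 2 * Real.cos (π / N)) * ∑ ℓ ∈ idx N, (a ℓ) ^ 2
      ≤ ∑ ℓ ∈ idx N, (a (ℓ + 1) - a ℓ) ^ 2 := by
  set d : ℤ → ℝ := fun ℓ => a (ℓ + 1) - a ℓ with hd
  have hP1 := parseval N hN a
  have hP2 := parseval N hN d
  have hterm : ∀ k ∈ Finset.range (2 * N), Complex.normSq (four N d k)
      = (2 - 2 * Real.cos ((k : ℝ) * π / N)) * Complex.normSq (four N a k) := by
    intro k _
    rw [hd, four_shift N hN a ha k, Complex.normSq_mul, normSq_wz_sub_one]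
    congr 2
    push_cast
    rw [show -(k:ℝ) * π / N = -((k:ℝ) * π / N) by ring, Real.cos_neg]
  have hineq : ∀ k ∈ Finset.range (2 * N),
      (2 - 2 * Real.cos (π / N)) * Complex.normSq (four N a k)
        ≤ Complex.normSq (four N d k) := by
    intro k hk
    rw [hterm k hk]
    rcases eq_or_ne k 0 with h | h
    · rw [h, four_zero_of_mean_zero N a h0]
      simp
    · apply mul_le_mul_of_nonneg_right _ (Complex.normSq_nonneg _)
      have hk2 : k ≤ 2 * N - 1 := by
        have := Finset.mem_range.mp hk
        omega
      have := cos_le_cos_pi_div N hN k (by omega) hk2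
      linarith
  have hsum := Finset.sum_le_sum hineq
  rw [← Finset.mul_sum, hP1, hP2] at hsum
  have h2N : (0:ℝ) < 2 * N := by
    have : (0:ℝ) < (N:ℝ) := by exact_mod_cast hN
    linarith
  have e : (2 - 2 * Real.cos (π / N)) * (2 * N * ∑ ℓ ∈ idx N, (a ℓ) ^ 2)
      = (2 * N) * ((2 - 2 * Real.cos (π / N)) * ∑ ℓ ∈ idx N, (a ℓ) ^ 2) := by ring
  rw [e] at hsum
  exact le_of_mul_le_mul_left hsum h2N


lemma sum_idx_wz (N : ℕ) (hN : 1 ≤ N) (m r : ℤ) (hm : ¬ ((2 * (N:ℤ)) ∣ m)) :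
    ∑ ℓ ∈ idx N, wz N (m * ℓ + r) = 0 := by
  have h1 : ∑ ℓ ∈ idx N, wz N (m * ℓ + r)
      = ∑ j ∈ Finset.range (2 * N), wz N (m * ((j : ℤ) - N + 1) + r) := by
    refine Finset.sum_bij' (fun i _ => (i + N - 1).toNat) (fun j _ => (j : ℤ) - N + 1)
      ?_ ?_ ?_ ?_ ?_
    · intro i hi
      simp only [idx, Finset.mem_Icc] at hi
      simp only [Finset.mem_range]
      omega
    · intro j hj
      simp only [Finset.mem_range] at hj
      simp only [idx, Finset.mem_Icc]
      omega
    · intro i hi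
      simp only [idx, Finset.mem_Icc] at hi
      rw [Int.toNat_of_nonneg (by omega)]
      ring
    · intro j hj
      simp only [Finset.mem_range] at hj
      rw [show (j : ℤ) - N + 1 + N - 1 = (j : ℤ) by ring, Int.toNat_natCast]
    · intro i hi
      simp only [idx, Finset.mem_Icc] at hi
      rw [Int.toNat_of_nonneg (by omega)]
      congr 2
      ring
  rw [h1]
  have h2 : ∀ j ∈ Finset.range (2 * N), wz N (m * ((j : ℤ) - N + 1) + r)
      = wz N ((j : ℤ) * m) * wz N (m * (1 - N) + r) := by
    intro j _
    rw [← wz_add]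
    congr 1
    ring
  rw [Finset.sum_congr rfl h2, ← Finset.sum_mul, geom_wz N hN m hm, zero_mul]

lemma sum_idx_cos (N : ℕ) (hN : 1 ≤ N) (m r : ℤ) (hm : ¬ ((2 * (N:ℤ)) ∣ m)) :
    ∑ ℓ ∈ idx N, Real.cos (((m * ℓ + r : ℤ) : ℝ) * π / N) = 0 := by
  have h := congrArg Complex.re (sum_idx_wz N hN m r hm)
  rw [Complex.re_sum] at h
  simpa [wz_re] using h

lemma sum_idx_sin (N : ℕ) (hN : 1 ≤ N) (m r : ℤ) (hm : ¬ ((2 * (N:ℤ)) ∣ m)) :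
    ∑ ℓ ∈ idx N, Real.sin (((m * ℓ + r : ℤ) : ℝ) * π / N) = 0 := by
  have h := congrArg Complex.im (sum_idx_wz N hN m r hm)
  rw [Complex.im_sum] at h
  simpa [wz_im] using h


lemma had0 (f : ℝ → ℝ) (c A d : ℝ) (hf : HasDerivAt f d c) :
    HasDerivAt (fun t => f (c + t * A)) (d * A) 0 := by
  have h1 : HasDerivAt (fun t : ℝ => c + t * A) A 0 := by
    simpa using ((hasDerivAt_id (0:ℝ)).mul_const A).const_add c
  have hf' : HasDerivAt f d ((fun t : ℝ => c + t * A) 0) := by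
    simpa using hf
  exact hf'.comp (0:ℝ) h1

lemma bD_key (N : ℕ) (hN : 1 ≤ N) (F : ℝ) (u : ℤ → ℝ) (s t : ℝ) (ℓ : ℤ) :
    bD N (yF N F + s • u + t • u) ℓ = F + (s + t) * bD N u ℓ := by
  have hNne : (N:ℝ) ≠ 0 := by positivity
  simp only [bD, yF, Pi.add_apply, Pi.smul_apply, smul_eq_mul]
  push_cast
  field_simp
  ring

lemma d2E_Ea (N : ℕ) (hN : 1 ≤ N) (φ : ℝ → ℝ) (hφ : ContDiffOn ℝ 2 φ (Set.Ioi 0))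
    (F : ℝ) (hF : 0 < F) (u : ℤ → ℝ) :
    d2E (Ea N φ) (yF N F) u u
      = (N:ℝ)⁻¹ * ∑ ℓ ∈ idx N, (deriv (deriv φ) F * (bD N u ℓ) ^ 2
          + deriv (deriv φ) (2 * F) * (bD N u ℓ + bD N u (ℓ + 1)) ^ 2) := by
  have hNne : (N:ℝ) ≠ 0 := by positivity
  set A : ℤ → ℝ := bD N u with hA
  set B : ℤ → ℝ := fun ℓ => A ℓ + A (ℓ + 1) with hB
  -- differentiability facts
  have hD1 : ∀ x : ℝ, 0 < x → HasDerivAt φ (deriv φ x) x := by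
    intro x hx
    exact ((hφ.differentiableOn (by norm_num)).differentiableAt
      (Ioi_mem_nhds hx)).hasDerivAt
  have hφ' : ContDiffOn ℝ 1 (deriv φ) (Set.Ioi 0) := by
    exact hφ.deriv_of_isOpen isOpen_Ioi (by norm_num)
  have hD2 : ∀ x : ℝ, 0 < x → HasDerivAt (deriv φ) (deriv (deriv φ) x) x := by
    intro x hx
    exact ((hφ'.differentiableOn (by norm_num)).differentiableAt (Ioi_mem_nhds hx)).hasDerivAt
  set M : ℝ := (∑ ℓ ∈ idx N, (|A ℓ| + |B ℓ|)) + 1 with hM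
  have hM1 : 1 ≤ M := by
    have : (0:ℝ) ≤ ∑ ℓ ∈ idx N, (|A ℓ| + |B ℓ|) :=
      Finset.sum_nonneg fun ℓ _ => by positivity
    simp only [hM]
    linarith
  have hM0 : 0 < M := by linarith
  have hMA : ∀ ℓ ∈ idx N, |A ℓ| ≤ M ∧ |B ℓ| ≤ M := by
    intro ℓ hℓ
    have h1 : |A ℓ| + |B ℓ| ≤ ∑ ℓ ∈ idx N, (|A ℓ| + |B ℓ|) :=
      Finset.single_le_sum (f := fun ℓ => |A ℓ| + |B ℓ|)
        (fun ℓ _ => by positivity) hℓ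
    constructor
    · simp only [hM]; linarith [abs_nonneg (B ℓ)]
    · simp only [hM]; linarith [abs_nonneg (A ℓ)]
  set δ : ℝ := F / (4 * M) with hδdef
  have hδ : 0 < δ := by positivity
  have hpos : ∀ s t : ℝ, |s| < δ → |t| < δ → ∀ ℓ ∈ idx N,
      0 < F + (s + t) * A ℓ ∧ 0 < 2 * F + (s + t) * B ℓ := by
    intro s t hs ht ℓ hℓ
    obtain ⟨hA', hB'⟩ := hMA ℓ hℓ
    have hst : |s + t| ≤ |s| + |t| := abs_add_le s t
    have h2δ : (|s| + |t|) * M < F / 2 := by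
      have : (|s| + |t|) < 2 * δ := by linarith
      calc (|s| + |t|) * M < 2 * δ * M := by
            apply mul_lt_mul_of_pos_right this hM0
        _ = F / 2 := by
            rw [hδdef]; field_simp; ring
    have hbA : |(s + t) * A ℓ| < F / 2 := by
      rw [abs_mul]
      calc |s + t| * |A ℓ| ≤ (|s| + |t|) * M := by
            apply mul_le_mul hst hA' (abs_nonneg _) (by positivity)
        _ < F / 2 := h2δ
    have hbB : |(s + t) * B ℓ| < F / 2 := by
      rw [abs_mul]
      calc |s + t| * |B ℓ| ≤ (|s| + |t|) * M := by
            apply mul_le_mul hst hB' (abs_nonneg _) (by positivity)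
        _ < F / 2 := h2δ
    constructor
    · have := neg_abs_le ((s + t) * A ℓ); linarith
    · have := neg_abs_le ((s + t) * B ℓ); linarith
  have hkey : ∀ s t : ℝ, Ea N φ (yF N F + s • u + t • u)
      = (N:ℝ)⁻¹ * ∑ ℓ ∈ idx N,
        (φ ((F + s * A ℓ) + t * A ℓ) + φ ((2 * F + s * B ℓ) + t * B ℓ)) := by
    intro s t
    rw [Ea]
    congr 1
    refine Finset.sum_congr rfl fun ℓ _ => ?_
    rw [bD_key N hN F u s t ℓ, bD_key N hN F u s t (ℓ + 1)]
    rw [show F + (s + t) * A ℓ = (F + s * A ℓ) + t * A ℓ from by ring]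
    rw [show F + s * A ℓ + t * A ℓ + (F + (s + t) * A (ℓ + 1))
        = (2 * F + s * B ℓ) + t * B ℓ from by simp only [hB]; ring]
  have hg : ∀ s : ℝ, |s| < δ →
      deriv (fun t : ℝ => Ea N φ (yF N F + s • u + t • u)) 0
      = (N:ℝ)⁻¹ * ∑ ℓ ∈ idx N,
        (deriv φ (F + s * A ℓ) * A ℓ + deriv φ (2 * F + s * B ℓ) * B ℓ) := by
    intro s hs
    simp only [hkey]
    apply HasDerivAt.deriv
    refine HasDerivAt.const_mul ((N:ℝ)⁻¹) (HasDerivAt.fun_sum fun ℓ hℓ => ?_)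
    obtain ⟨h1, h2⟩ := hpos s 0 hs (by simpa using hδ) ℓ hℓ
    have h1' : 0 < F + s * A ℓ := by simpa using h1
    have h2' : 0 < 2 * F + s * B ℓ := by simpa using h2
    exact (had0 φ (F + s * A ℓ) (A ℓ) _ (hD1 _ h1')).add
      (had0 φ (2 * F + s * B ℓ) (B ℓ) _ (hD1 _ h2'))
  show deriv (fun s : ℝ => deriv (fun t : ℝ => Ea N φ (yF N F + s • u + t • u)) 0) 0 = _
  have hev : (fun s : ℝ => deriv (fun t : ℝ => Ea N φ (yF N F + s • u + t • u)) 0)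
      =ᶠ[nhds 0] fun s : ℝ => (N:ℝ)⁻¹ * ∑ ℓ ∈ idx N,
        (deriv φ (F + s * A ℓ) * A ℓ + deriv φ (2 * F + s * B ℓ) * B ℓ) := by
    filter_upwards [eventually_abs_sub_lt (0:ℝ) hδ] with s hs
    rw [sub_zero] at hs
    exact hg s hs
  rw [hev.deriv_eq]
  have hd : HasDerivAt (fun s : ℝ => (N:ℝ)⁻¹ * ∑ ℓ ∈ idx N,
      (deriv φ (F + s * A ℓ) * A ℓ + deriv φ (2 * F + s * B ℓ) * B ℓ))
      ((N:ℝ)⁻¹ * ∑ ℓ ∈ idx N, ((deriv (deriv φ) F * A ℓ) * A ℓ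
        + (deriv (deriv φ) (2 * F) * B ℓ) * B ℓ)) 0 := by
    refine HasDerivAt.const_mul ((N:ℝ)⁻¹) (HasDerivAt.fun_sum fun ℓ hℓ => ?_)
    exact ((had0 (deriv φ) F (A ℓ) _ (hD2 F hF)).mul_const (A ℓ)).add
      ((had0 (deriv φ) (2 * F) (B ℓ) _ (hD2 (2 * F) (by linarith))).mul_const (B ℓ))
  rw [hd.deriv]
  congr 1
  exact Finset.sum_congr rfl fun ℓ _ => by ring


/-- half-angle identity -/
lemma lam_eq (N : ℕ) (hN : 1 ≤ N) :
    2 - 2 * Real.cos (π / N) = 4 * Real.sin (π / (2 * N)) ^ 2 := by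
  have hNne : (N:ℝ) ≠ 0 := by positivity
  have h2 : π / N = 2 * (π / (2 * N)) := by field_simp
  rw [h2, Real.cos_two_mul']
  have := Real.sin_sq_add_cos_sq (π / (2 * N))
  linarith

lemma const_id (N : ℕ) (hN : 1 ≤ N) :
    (N:ℝ)⁻¹ ^ 2 * muEps N ^ 2 = 2 - 2 * Real.cos (π / N) := by
  have hNne : (N:ℝ) ≠ 0 := by positivity
  rw [lam_eq N hN, muEps]
  rw [show π * (N:ℝ)⁻¹ / 2 = π / (2 * N) by ring]
  field_simp
  ring

lemma card_idx (N : ℕ) : ((idx N).card : ℝ) = 2 * N := by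
  rw [idx, Int.card_Icc]
  rw [show (N:ℤ) + 1 - (-(N:ℤ) + 1) = ((2 * N : ℕ) : ℤ) by push_cast; ring,
    Int.toNat_natCast]
  push_cast
  ring

/-- the minimizing displacement -/
def u0 (N : ℕ) : ℤ → ℝ :=
  fun ℓ => Real.sin ((ℓ:ℝ) * π / N) / (2 * N * Real.sin (π / (2 * N)))

lemma sin_pos_aux (N : ℕ) (hN : 1 ≤ N) : 0 < Real.sin (π / (2 * N)) := by
  have hNpos : (0:ℝ) < N := by exact_mod_cast hN
  apply Real.sin_pos_of_pos_of_lt_pi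
  · positivity
  · have hN' : (1:ℝ) ≤ N := by exact_mod_cast hN
    have h1 : (1:ℝ) < 2 * N := by linarith
    calc π / (2 * N) < π / 1 := by
          apply div_lt_div_of_pos_left Real.pi_pos one_pos h1
      _ = π := div_one π


lemma not_dvd_one (N : ℕ) (hN : 1 ≤ N) : ¬ ((2 * (N:ℤ)) ∣ 1) := by
  intro h
  have := Int.le_of_dvd one_pos h
  omega

lemma not_dvd_two (N : ℕ) (hN : 2 ≤ N) : ¬ ((2 * (N:ℤ)) ∣ 2) := by
  intro h
  have := Int.le_of_dvd two_pos h
  omega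

lemma u0_periodic (N : ℕ) (hN : 1 ≤ N) : ∀ ℓ : ℤ, u0 N (ℓ + 2 * (N:ℤ)) = u0 N ℓ := by
  intro ℓ
  have hNne : (N:ℝ) ≠ 0 := by positivity
  simp only [u0]
  congr 1
  rw [show ((ℓ + 2 * (N:ℤ) : ℤ) : ℝ) * π / N = (ℓ:ℝ) * π / N + 2 * π by
    push_cast; field_simp]
  exact Real.sin_add_two_pi _

lemma u0_sum (N : ℕ) (hN : 1 ≤ N) : ∑ ℓ ∈ idx N, u0 N ℓ = 0 := by
  simp only [u0]
  rw [← Finset.sum_div]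
  rw [show ∑ ℓ ∈ idx N, Real.sin ((ℓ:ℝ) * π / N)
      = ∑ ℓ ∈ idx N, Real.sin (((1 * ℓ + 0 : ℤ) : ℝ) * π / N) from
    Finset.sum_congr rfl fun ℓ _ => by norm_num]
  rw [sum_idx_sin N hN 1 0 (not_dvd_one N hN), zero_div]

lemma bD_u0 (N : ℕ) (hN : 1 ≤ N) (ℓ : ℤ) :
    bD N (u0 N) ℓ = Real.cos ((2 * (ℓ:ℝ) - 1) * π / (2 * N)) := by
  have hNne : (N:ℝ) ≠ 0 := by positivity
  have hs := (sin_pos_aux N hN).ne'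
  simp only [bD, u0]
  rw [div_sub_div_same, Real.sin_sub_sin]
  rw [show ((ℓ:ℝ) * π / N - ((ℓ - 1 : ℤ) : ℝ) * π / N) / 2 = π / (2 * N) by
    push_cast; field_simp; ring]
  rw [show ((ℓ:ℝ) * π / N + ((ℓ - 1 : ℤ) : ℝ) * π / N) / 2 = (2 * (ℓ:ℝ) - 1) * π / (2 * N) by
    push_cast; field_simp; ring]
  rw [mul_div_assoc', div_eq_iff (mul_ne_zero (mul_ne_zero two_ne_zero hNne) hs)]
  ring

lemma sum_bD_u0_sq (N : ℕ) (hN : 2 ≤ N) :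
    ∑ ℓ ∈ idx N, (bD N (u0 N) ℓ) ^ 2 = N := by
  have hN1 : 1 ≤ N := by omega
  have hNne : (N:ℝ) ≠ 0 := by positivity
  have e : ∀ ℓ ∈ idx N, (bD N (u0 N) ℓ) ^ 2
      = 1 / 2 + Real.cos (((2 * ℓ + (-1) : ℤ) : ℝ) * π / N) / 2 := by
    intro ℓ _
    rw [bD_u0 N hN1, Real.cos_sq]
    congr 2
    push_cast
    field_simp
    ring
  rw [Finset.sum_congr rfl e, Finset.sum_add_distrib, ← Finset.sum_div, ← Finset.sum_div,
    sum_idx_cos N hN1 2 (-1) (not_dvd_two N hN), zero_div, add_zero, Finset.sum_const,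
    nsmul_eq_mul, mul_one, card_idx N]
  ring

lemma nl2_u0 (N : ℕ) (hN : 2 ≤ N) : nl2 N (bD N (u0 N)) = 1 := by
  have hNne : (N:ℝ) ≠ 0 := by positivity
  rw [nl2, sum_bD_u0_sq N hN, inv_mul_cancel₀ hNne, Real.sqrt_one]

lemma sum_sin_sq (N : ℕ) (hN : 2 ≤ N) :
    ∑ ℓ ∈ idx N, Real.sin ((ℓ:ℝ) * π / N) ^ 2 = N := by
  have hN1 : 1 ≤ N := by omega
  have e : ∀ ℓ ∈ idx N, Real.sin ((ℓ:ℝ) * π / N) ^ 2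
      = 1 / 2 - Real.cos (((2 * ℓ + 0 : ℤ) : ℝ) * π / N) / 2 := by
    intro ℓ _
    rw [Real.sin_sq, Real.cos_sq,
      show 2 * ((ℓ:ℝ) * π / N) = ((2 * ℓ + 0 : ℤ) : ℝ) * π / N by push_cast; ring]
    ring
  rw [Finset.sum_congr rfl e, Finset.sum_sub_distrib, ← Finset.sum_div, ← Finset.sum_div,
    sum_idx_cos N hN1 2 0 (not_dvd_two N hN), zero_div, sub_zero, Finset.sum_const,
    nsmul_eq_mul, mul_one, card_idx N]
  ring

lemma sum_diff_sq_u0 (N : ℕ) (hN : 2 ≤ N) :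
    ∑ ℓ ∈ idx N, (bD N (u0 N) (ℓ + 1) - bD N (u0 N) ℓ) ^ 2
      = (2 - 2 * Real.cos (π / N)) * N := by
  have hN1 : 1 ≤ N := by omega
  have hNne : (N:ℝ) ≠ 0 := by positivity
  have e : ∀ ℓ ∈ idx N, (bD N (u0 N) (ℓ + 1) - bD N (u0 N) ℓ) ^ 2
      = 4 * Real.sin (π / (2 * N)) ^ 2 * Real.sin ((ℓ:ℝ) * π / N) ^ 2 := by
    intro ℓ _
    rw [bD_u0 N hN1 (ℓ + 1), bD_u0 N hN1 ℓ, Real.cos_sub_cos,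
      show ((2 * ((ℓ + 1 : ℤ) : ℝ) - 1) * π / (2 * N) + (2 * (ℓ:ℝ) - 1) * π / (2 * N)) / 2
        = (ℓ:ℝ) * π / N by push_cast; field_simp; ring,
      show ((2 * ((ℓ + 1 : ℤ) : ℝ) - 1) * π / (2 * N) - (2 * (ℓ:ℝ) - 1) * π / (2 * N)) / 2
        = π / (2 * N) by push_cast; field_simp; ring]
    ring
  rw [Finset.sum_congr rfl e, ← Finset.mul_sum, sum_sin_sq N hN, lam_eq N hN1]

lemma bD_periodic (N : ℕ) (u : ℤ → ℝ) (hper : ∀ ℓ : ℤ, u (ℓ + 2 * (N:ℤ)) = u ℓ) :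
    ∀ ℓ : ℤ, bD N u (ℓ + 2 * (N:ℤ)) = bD N u ℓ := by
  intro ℓ
  simp only [bD]
  rw [hper, show ℓ + 2 * (N:ℤ) - 1 = (ℓ - 1) + 2 * N by ring, hper]

lemma sum_bD_zero (N : ℕ) (hN : 1 ≤ N) (u : ℤ → ℝ)
    (hper : ∀ ℓ : ℤ, u (ℓ + 2 * (N:ℤ)) = u ℓ) :
    ∑ ℓ ∈ idx N, bD N u ℓ = 0 := by
  simp only [bD]
  rw [← Finset.mul_sum]
  have hshift := sum_idx_shift N hN (fun ℓ => u (ℓ - 1)) (fun ℓ => by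
    rw [show ℓ + 2 * (N:ℤ) - 1 = (ℓ - 1) + 2 * N by ring, hper])
  simp only [add_sub_cancel_right] at hshift
  rw [Finset.sum_sub_distrib, hshift, sub_self, mul_zero]


theorem stmt4 (N : ℕ) (hN : 2 ≤ N) (φ : ℝ → ℝ)
    (hφ : ContDiffOn ℝ 2 φ (Set.Ioi 0)) (F : ℝ) (hF : 0 < F)
    (h2F : deriv (deriv φ) (2 * F) ≤ 0) :
    IsGLB {r : ℝ | ∃ u ∈ uSet N, nl2 N (bD N u) = 1 ∧ r = d2E (Ea N φ) (yF N F) u u}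
      (deriv (deriv φ) F + 4 * deriv (deriv φ) (2 * F)
        - (N : ℝ)⁻¹ ^ 2 * (muEps N) ^ 2 * deriv (deriv φ) (2 * F)) := by
  have hN1 : 1 ≤ N := by omega
  have hNpos : (0:ℝ) < N := by exact_mod_cast hN1
  have hNne : (N:ℝ) ≠ 0 := ne_of_gt hNpos
  have hconst : (N:ℝ)⁻¹ ^ 2 * muEps N ^ 2 = 2 - 2 * Real.cos (π / N) := const_id N hN1
  have hSone : ∀ u : ℤ → ℝ, nl2 N (bD N u) = 1 →
      (N:ℝ)⁻¹ * ∑ ℓ ∈ idx N, (bD N u ℓ) ^ 2 = 1 := by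
    intro u hn
    have h0 : (0:ℝ) ≤ (N:ℝ)⁻¹ * ∑ ℓ ∈ idx N, (bD N u ℓ) ^ 2 := by positivity
    have h2 := congrArg (fun x : ℝ => x ^ 2) hn
    simp only [nl2] at h2
    rwa [Real.sq_sqrt h0, one_pow] at h2
  have hval : ∀ u : ℤ → ℝ, u ∈ uSet N → nl2 N (bD N u) = 1 →
      d2E (Ea N φ) (yF N F) u u
        = deriv (deriv φ) F + 4 * deriv (deriv φ) (2 * F)
          - deriv (deriv φ) (2 * F)
            * ((N:ℝ)⁻¹ * ∑ ℓ ∈ idx N, (bD N u (ℓ + 1) - bD N u ℓ) ^ 2) := by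
    intro u hu hn
    obtain ⟨hper, -⟩ := hu
    have hAper := bD_periodic N u hper
    have hS := hSone u hn
    have hshift : ∑ ℓ ∈ idx N, (bD N u (ℓ + 1)) ^ 2 = ∑ ℓ ∈ idx N, (bD N u ℓ) ^ 2 :=
      sum_idx_shift N hN1 (fun ℓ => (bD N u ℓ) ^ 2) (fun ℓ => by rw [hAper])
    have hB : ∑ ℓ ∈ idx N, (bD N u ℓ + bD N u (ℓ + 1)) ^ 2
        = 4 * ∑ ℓ ∈ idx N, (bD N u ℓ) ^ 2
          - ∑ ℓ ∈ idx N, (bD N u (ℓ + 1) - bD N u ℓ) ^ 2 := by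
      have e : ∀ ℓ ∈ idx N, (bD N u ℓ + bD N u (ℓ + 1)) ^ 2
          = (2 * (bD N u ℓ) ^ 2 + 2 * (bD N u (ℓ + 1)) ^ 2)
            - (bD N u (ℓ + 1) - bD N u ℓ) ^ 2 := fun ℓ _ => by ring
      rw [Finset.sum_congr rfl e, Finset.sum_sub_distrib, Finset.sum_add_distrib,
        ← Finset.mul_sum, ← Finset.mul_sum, hshift]
      ring
    rw [d2E_Ea N hN1 φ hφ F hF u, Finset.sum_add_distrib, ← Finset.mul_sum,
      ← Finset.mul_sum, hB]
    linear_combination (deriv (deriv φ) F + 4 * deriv (deriv φ) (2 * F)) * hS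
  have hDlb : ∀ u : ℤ → ℝ, u ∈ uSet N → nl2 N (bD N u) = 1 →
      2 - 2 * Real.cos (π / N)
        ≤ (N:ℝ)⁻¹ * ∑ ℓ ∈ idx N, (bD N u (ℓ + 1) - bD N u ℓ) ^ 2 := by
    intro u hu hn
    obtain ⟨hper, -⟩ := hu
    have hw := wirtinger N hN1 (bD N u) (bD_periodic N u hper) (sum_bD_zero N hN1 u hper)
    have hS := hSone u hn
    have h1 : (N:ℝ)⁻¹ * ((2 - 2 * Real.cos (π / N)) * ∑ ℓ ∈ idx N, (bD N u ℓ) ^ 2)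
        ≤ (N:ℝ)⁻¹ * ∑ ℓ ∈ idx N, (bD N u (ℓ + 1) - bD N u ℓ) ^ 2 :=
      mul_le_mul_of_nonneg_left hw (by positivity)
    calc 2 - 2 * Real.cos (π / N)
        = (2 - 2 * Real.cos (π / N)) * ((N:ℝ)⁻¹ * ∑ ℓ ∈ idx N, (bD N u ℓ) ^ 2) := by
          rw [hS, mul_one]
      _ = (N:ℝ)⁻¹ * ((2 - 2 * Real.cos (π / N)) * ∑ ℓ ∈ idx N, (bD N u ℓ) ^ 2) := by ring
      _ ≤ _ := h1
  constructor
  · rintro r ⟨u, hu, hn, rfl⟩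
    rw [hval u hu hn, hconst]
    have hD := hDlb u hu hn
    nlinarith [mul_nonneg (neg_nonneg.2 h2F) (sub_nonneg.2 hD)]
  · intro b hb
    apply hb
    refine ⟨u0 N, ⟨u0_periodic N hN1, u0_sum N hN1⟩, nl2_u0 N hN, ?_⟩
    rw [hval (u0 N) ⟨u0_periodic N hN1, u0_sum N hN1⟩ (nl2_u0 N hN),
      sum_diff_sq_u0 N hN, hconst]
    field_simp
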